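/- Let a ∈ (0,1), ε ≥ 0, B < ∞, M < ∞. Let X be a random variable with Lebesgue density f satisfying f(x) ≤ M for all x, and let ψ be the conditional median of X given Y (Y = X + Z, Z standard Gaussian independent of X). Suppose sup_y |ay − ψ(y)| ≤ √(2aε) and ∫_ℝ exp((1−a)y²/2 − min_{x ∈ [ay−√(2aε), ay+√(2aε)]} (x−y)²/2)·|ay − ψ(y)| dy ≤ B. Then there exists a finite constant C₀, depending only on a, M, B, ε, such that for every z ∈ ℝ, ∫_{z−1/2}^{z+1/2} e^{a(1−a)x²/2}·f(ax) dx ≤ C₀. -/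

import Mathlib

set_option maxHeartbeats 1000000

open MeasureTheory Real Set
open scoped ENNReal

noncomputable def phi (a t : ℝ) : ℝ := Real.exp (-(a * t ^ 2) / 2)
noncomputable def Wf (a r : ℝ) : ℝ := ∫ t in Set.Ioi r, phi a t
noncomputable def Itot (a : ℝ) : ℝ := ∫ t, phi a t

lemma phi_nonneg (a t : ℝ) : 0 ≤ phi a t := (Real.exp_pos _).le

lemma phi_even (a u y : ℝ) : phi a (u - y) = phi a (y - u) := by
  unfold phi; ring_nf

lemma phi_cont (a : ℝ) : Continuous (phi a) := by
  unfold phi; fun_prop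

lemma integrable_phi {a : ℝ} (ha : 0 < a) : Integrable (phi a) := by
  have h := integrable_exp_neg_mul_sq (show (0:ℝ) < a/2 by linarith)
  have e : phi a = fun t => Real.exp (-(a/2) * t ^ 2) := by
    funext t; unfold phi; congr 1; ring
  rw [e]; exact h

lemma integrable_phi_sub {a : ℝ} (ha : 0 < a) (u : ℝ) :
    Integrable (fun y => phi a (u - y)) := by
  have h : Integrable (fun y : ℝ => phi a (y - u)) := (integrable_phi ha).comp_sub_right u
  have e : (fun y => phi a (u - y)) = fun y : ℝ => phi a (y - u) := by
    funext y; rw [phi_even]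
  rw [e]; exact h

lemma integral_Iic_add_Ioi' {c : ℝ} {f : ℝ → ℝ} (hf : Integrable f) :
    (∫ x in Set.Iic c, f x) + ∫ x in Set.Ioi c, f x = ∫ x, f x := by
  rw [← setIntegral_union (Set.Iic_disjoint_Ioi le_rfl) measurableSet_Ioi
    hf.integrableOn hf.integrableOn, Set.Iic_union_Ioi, setIntegral_univ]

lemma Wf_nonneg (a r : ℝ) : 0 ≤ Wf a r :=
  setIntegral_nonneg measurableSet_Ioi fun t _ => phi_nonneg a t

lemma Wf_antitone {a : ℝ} (ha : 0 < a) : Antitone (Wf a) := by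
  intro r s hrs
  exact setIntegral_mono_set (integrable_phi ha).integrableOn
    (Filter.Eventually.of_forall fun t => phi_nonneg a t)
    (HasSubset.Subset.eventuallyLE (Set.Ioi_subset_Ioi hrs))

lemma slab {a : ℝ} (ha : 0 < a) {p q : ℝ} (h : p ≤ q) :
    ∫ t in Set.Ioc p q, phi a t = Wf a p - Wf a q := by
  have hu : Set.Ioi p = Set.Ioc p q ∪ Set.Ioi q := (Set.Ioc_union_Ioi_eq_Ioi h).symm
  have h2 : ∫ t in Set.Ioc p q ∪ Set.Ioi q, phi a t
      = (∫ t in Set.Ioc p q, phi a t) + ∫ t in Set.Ioi q, phi a t :=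
    setIntegral_union (Set.Ioc_disjoint_Ioi le_rfl) measurableSet_Ioi
      (integrable_phi ha).integrableOn (integrable_phi ha).integrableOn
  have h3 : Wf a p = (∫ t in Set.Ioc p q, phi a t) + Wf a q := by
    unfold Wf; rw [hu, h2]
  linarith

lemma slab' {a : ℝ} (ha : 0 < a) {p q : ℝ} (h : p ≤ q) (u : ℝ) :
    ∫ y in Set.Ioc p q, phi a (u - y) = Wf a (u - q) - Wf a (u - p) := by
  have h1 : ∫ y in Set.Ioc p q, phi a (u - y) = ∫ y in p..q, phi a (u - y) := by
    rw [intervalIntegral.integral_of_le h]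
  have h2 : (∫ y in p..q, phi a (u - y)) = ∫ t in (u - q)..(u - p), phi a t :=
    intervalIntegral.integral_comp_sub_left (phi a) u
  have h3 : (∫ t in (u - q)..(u - p), phi a t) = ∫ t in Set.Ioc (u - q) (u - p), phi a t := by
    rw [intervalIntegral.integral_of_le (by linarith)]
  rw [h1, h2, h3, slab ha (by linarith)]

lemma Wsum {a : ℝ} (ha : 0 < a) (r : ℝ) : Wf a r + Wf a (-r) = Itot a := by
  have h1 : Wf a (-r) = ∫ t in Set.Iic r, phi a t := by
    have h0 : (∫ x in Set.Ioi (-r), phi a (-x)) = ∫ x in Set.Iic r, phi a x := by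
      rw [integral_comp_neg_Ioi]; norm_num
    rw [← h0]; unfold Wf
    refine setIntegral_congr_fun measurableSet_Ioi fun t _ => ?_
    unfold phi; ring_nf
  rw [h1, add_comm]
  show (∫ t in Set.Iic r, phi a t) + ∫ t in Set.Ioi r, phi a t = ∫ t, phi a t
  exact integral_Iic_add_Ioi' (integrable_phi ha)

lemma Wf_le_Itot {a : ℝ} (ha : 0 < a) (r : ℝ) : Wf a r ≤ Itot a := by
  have h1 := Wsum ha r
  have h2 := Wf_nonneg a (-r)
  linarith

lemma Itot_nonneg {a : ℝ} (ha : 0 < a) : 0 ≤ Itot a :=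
  le_trans (Wf_nonneg a 0) (Wf_le_Itot ha 0)

lemma Wf_decay {a : ℝ} (ha : 0 < a) {r : ℝ} (hr : 0 ≤ r) :
    Wf a r ≤ Real.exp (-(a * r ^ 2) / 2) * Itot a := by
  have hint : Integrable (fun t : ℝ => Real.exp (-(a * r ^ 2) / 2) * phi a (t - r)) :=
    ((integrable_phi ha).comp_sub_right r).const_mul _
  have step1 : Wf a r ≤ ∫ t in Set.Ioi r, Real.exp (-(a * r ^ 2) / 2) * phi a (t - r) := by
    refine setIntegral_mono_on (integrable_phi ha).integrableOn hint.integrableOn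
      measurableSet_Ioi fun t ht => ?_
    have ht' : r < t := ht
    unfold phi
    rw [← Real.exp_add]
    apply Real.exp_le_exp.2
    nlinarith [mul_nonneg ha.le (mul_nonneg hr (sub_nonneg.2 ht'.le))]
  have step2 : (∫ t in Set.Ioi r, Real.exp (-(a * r ^ 2) / 2) * phi a (t - r))
      ≤ ∫ t, Real.exp (-(a * r ^ 2) / 2) * phi a (t - r) := by
    refine setIntegral_le_integral hint (Filter.Eventually.of_forall fun t => ?_)
    exact mul_nonneg (Real.exp_pos _).le (phi_nonneg _ _)
  have step3 : (∫ t, Real.exp (-(a * r ^ 2) / 2) * phi a (t - r))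
      = Real.exp (-(a * r ^ 2) / 2) * Itot a := by
    rw [integral_const_mul]
    unfold Itot
    rw [integral_sub_right_eq_self (phi a) r]
  linarith

lemma Wf_half_pos {a : ℝ} (ha : 0 < a) : 0 < Wf a (1/2) := by
  have h1 : (∫ t in Set.Ioc (1/2 : ℝ) 1, phi a t) = Wf a (1/2) - Wf a 1 := slab ha (by norm_num)
  have h2 : Real.exp (-a/2) * (1 - 1/2) ≤ ∫ t in Set.Ioc (1/2 : ℝ) 1, phi a t := by
    have hconst : (∫ _t in Set.Ioc (1/2 : ℝ) 1, Real.exp (-a/2)) = Real.exp (-a/2) * (1 - 1/2) := by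
      rw [setIntegral_const, measureReal_def, Real.volume_Ioc,
        ENNReal.toReal_ofReal (by norm_num : (0:ℝ) ≤ 1 - 1/2), smul_eq_mul]
      ring
    rw [← hconst]
    refine setIntegral_mono_on (integrableOn_const (by simp [Real.volume_Ioc]))
      (integrable_phi ha).integrableOn measurableSet_Ioc fun t ht => ?_
    unfold phi
    apply Real.exp_le_exp.2
    obtain ⟨ht1, ht2⟩ := ht
    nlinarith [mul_nonneg ha.le (mul_nonneg (sub_nonneg.2 ht2) (show (0:ℝ) ≤ 1 + t by linarith))]
  have h3 := Wf_nonneg a 1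
  have h4 := Real.exp_pos (-a/2)
  nlinarith

noncomputable def gfun (a : ℝ) (f : ℝ → ℝ) (u : ℝ) : ℝ :=
  Real.exp (a * (1 - a) * u ^ 2 / 2) * f (a * u)

lemma gfun_nonneg (a : ℝ) (f : ℝ → ℝ) (hf0 : ∀ x, 0 ≤ f x) (u : ℝ) : 0 ≤ gfun a f u :=
  mul_nonneg (Real.exp_pos _).le (hf0 _)

lemma median_bound (a δ M : ℝ) (hδ : 0 ≤ δ) (f ψ : ℝ → ℝ)
    (hf0 : ∀ x, 0 ≤ f x) (hfM : ∀ x, f x ≤ M) (hfInt : Integrable f)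
    (hmed : ∀ y : ℝ, ∫ x in Set.Iic (ψ y), f x * Real.exp (-(x - y) ^ 2 / 2)
        = (1 / 2) * ∫ x, f x * Real.exp (-(x - y) ^ 2 / 2))
    (hsup : ∀ y : ℝ, |a * y - ψ y| ≤ δ) (y : ℝ) :
    |(∫ x in Set.Ioi (a * y), f x * Real.exp (-(x - y) ^ 2 / 2))
      - ∫ x in Set.Iio (a * y), f x * Real.exp (-(x - y) ^ 2 / 2)|
      ≤ 2 * M * Real.exp (-sInf ((fun x => (x - y) ^ 2 / 2) '' Set.Icc (a * y - δ) (a * y + δ)))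
          * |a * y - ψ y| := by
  set F : ℝ → ℝ := fun x => f x * Real.exp (-(x - y) ^ 2 / 2) with hF
  have hcont : Continuous fun x : ℝ => Real.exp (-(x - y) ^ 2 / 2) := by fun_prop
  have hFmeas : AEStronglyMeasurable F volume :=
    hfInt.aestronglyMeasurable.mul hcont.aestronglyMeasurable
  have hFnn : ∀ x, 0 ≤ F x := fun x => mul_nonneg (hf0 x) (Real.exp_pos _).le
  have hFint : Integrable F := by
    refine hfInt.mono' hFmeas (Filter.Eventually.of_forall fun x => ?_)
    rw [Real.norm_eq_abs, abs_of_nonneg (hFnn x)]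
    exact mul_le_of_le_one_right (hf0 x) (Real.exp_le_one_iff.2 (by nlinarith [sq_nonneg (x - y)]))
  set mI : ℝ := sInf ((fun x => (x - y) ^ 2 / 2) '' Set.Icc (a * y - δ) (a * y + δ)) with hmI
  have hM0 : 0 ≤ M := le_trans (hf0 0) (hfM 0)
  have hm_le : ∀ x, x ∈ Set.Icc (a * y - δ) (a * y + δ) → mI ≤ (x - y) ^ 2 / 2 := by
    intro x hx
    refine csInf_le ⟨0, ?_⟩ ⟨x, hx, rfl⟩
    rintro v ⟨x', _, rfl⟩
    positivity
  have hFbound : ∀ x, x ∈ Set.Icc (a * y - δ) (a * y + δ) → ‖F x‖ ≤ M * Real.exp (-mI) := by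
    intro x hx
    rw [Real.norm_eq_abs, abs_of_nonneg (hFnn x)]
    refine mul_le_mul (hfM x) (Real.exp_le_exp.2 ?_) (Real.exp_pos _).le hM0
    have := hm_le x hx
    linarith
  have hIio : (∫ x in Set.Iio (a * y), F x) = ∫ x in Set.Iic (a * y), F x :=
    integral_Iic_eq_integral_Iio.symm
  have htot : (∫ x in Set.Iic (a * y), F x) + ∫ x in Set.Ioi (a * y), F x = ∫ x, F x :=
    integral_Iic_add_Ioi' hFint
  have hhalf : (∫ x in Set.Iic (ψ y), F x) = (1 / 2) * ∫ x, F x := hmed y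
  have hsy := abs_le.1 (hsup y)
  have key : (∫ x in Set.Ioi (a * y), F x) - (∫ x in Set.Iio (a * y), F x)
      = 2 * ((∫ x in Set.Iic (ψ y), F x) - ∫ x in Set.Iic (a * y), F x) := by
    rw [hIio]; linarith
  rcases le_total (ψ y) (a * y) with h1 | h1
  · have hsplit : (∫ x in Set.Iic (a * y), F x)
        = (∫ x in Set.Iic (ψ y), F x) + ∫ x in Set.Ioc (ψ y) (a * y), F x := by
      rw [← setIntegral_union (Set.Iic_disjoint_Ioc le_rfl) measurableSet_Ioc
        hFint.integrableOn hFint.integrableOn, Set.Iic_union_Ioc_eq_Iic h1]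
    have hsub : Set.Ioc (ψ y) (a * y) ⊆ Set.Icc (a * y - δ) (a * y + δ) := by
      intro x hx
      exact ⟨by linarith [hx.1, hsy.1], by linarith [hx.2]⟩
    have hnorm : ‖∫ x in Set.Ioc (ψ y) (a * y), F x‖
        ≤ M * Real.exp (-mI) * (volume (Set.Ioc (ψ y) (a * y))).toReal :=
      norm_setIntegral_le_of_norm_le_const measure_Ioc_lt_top
        (fun x hx => hFbound x (hsub hx))
    rw [Real.volume_Ioc, ENNReal.toReal_ofReal (by linarith)] at hnorm
    rw [Real.norm_eq_abs] at hnorm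
    rw [key, hsplit, abs_of_nonneg (show (0:ℝ) ≤ a * y - ψ y by linarith)]
    have hre : 2 * ((∫ x in Set.Iic (ψ y), F x)
        - ((∫ x in Set.Iic (ψ y), F x) + ∫ x in Set.Ioc (ψ y) (a * y), F x))
        = -(2 * ∫ x in Set.Ioc (ψ y) (a * y), F x) := by ring
    rw [hre, abs_neg, abs_mul, abs_two]
    nlinarith [abs_nonneg (∫ x in Set.Ioc (ψ y) (a * y), F x)]
  · have hsplit : (∫ x in Set.Iic (ψ y), F x)
        = (∫ x in Set.Iic (a * y), F x) + ∫ x in Set.Ioc (a * y) (ψ y), F x := by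
      rw [← setIntegral_union (Set.Iic_disjoint_Ioc le_rfl) measurableSet_Ioc
        hFint.integrableOn hFint.integrableOn, Set.Iic_union_Ioc_eq_Iic h1]
    have hsub : Set.Ioc (a * y) (ψ y) ⊆ Set.Icc (a * y - δ) (a * y + δ) := by
      intro x hx
      exact ⟨by linarith [hx.1], by linarith [hx.2, hsy.2]⟩
    have hnorm : ‖∫ x in Set.Ioc (a * y) (ψ y), F x‖
        ≤ M * Real.exp (-mI) * (volume (Set.Ioc (a * y) (ψ y))).toReal :=
      norm_setIntegral_le_of_norm_le_const measure_Ioc_lt_top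
        (fun x hx => hFbound x (hsub hx))
    rw [Real.volume_Ioc, ENNReal.toReal_ofReal (by linarith)] at hnorm
    rw [Real.norm_eq_abs] at hnorm
    rw [key, hsplit, abs_of_nonpos (show a * y - ψ y ≤ 0 by linarith)]
    have hre : 2 * (((∫ x in Set.Iic (a * y), F x) + ∫ x in Set.Ioc (a * y) (ψ y), F x)
        - (∫ x in Set.Iic (a * y), F x)) = 2 * ∫ x in Set.Ioc (a * y) (ψ y), F x := by ring
    rw [hre, abs_mul, abs_two]
    nlinarith [abs_nonneg (∫ x in Set.Ioc (a * y) (ψ y), F x)]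

lemma exp_rearrange (A B C D q : ℝ) (h : A + B = C + D) :
    Real.exp A * q * Real.exp B = Real.exp C * (q * Real.exp D) := by
  rw [mul_comm (Real.exp A) q, mul_assoc, ← Real.exp_add, h, Real.exp_add]; ring

lemma subst_Ioi (a : ℝ) (ha : 0 < a) (f : ℝ → ℝ) (y : ℝ) :
    (∫ u in Set.Ioi y, gfun a f u * phi a (u - y))
      = a⁻¹ * (Real.exp ((1 - a) * y ^ 2 / 2)
          * ∫ x in Set.Ioi (a * y), f x * Real.exp (-(x - y) ^ 2 / 2)) := by
  have h1 : ∀ u : ℝ, gfun a f u * phi a (u - y)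
      = Real.exp ((1 - a) * y ^ 2 / 2)
          * ((fun x => f x * Real.exp (-(x - y) ^ 2 / 2)) (a * u)) := by
    intro u
    show Real.exp (a * (1 - a) * u ^ 2 / 2) * f (a * u) * Real.exp (-(a * (u - y) ^ 2) / 2)
        = Real.exp ((1 - a) * y ^ 2 / 2) * (f (a * u) * Real.exp (-(a * u - y) ^ 2 / 2))
    exact exp_rearrange _ _ _ _ _ (by ring)
  calc (∫ u in Set.Ioi y, gfun a f u * phi a (u - y))
      = ∫ u in Set.Ioi y, Real.exp ((1 - a) * y ^ 2 / 2)
          * ((fun x => f x * Real.exp (-(x - y) ^ 2 / 2)) (a * u)) :=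
        setIntegral_congr_fun measurableSet_Ioi fun u _ => h1 u
    _ = Real.exp ((1 - a) * y ^ 2 / 2)
          * ∫ u in Set.Ioi y, (fun x => f x * Real.exp (-(x - y) ^ 2 / 2)) (a * u) :=
        integral_const_mul _ _
    _ = Real.exp ((1 - a) * y ^ 2 / 2)
          * (a⁻¹ • ∫ x in Set.Ioi (a * y), f x * Real.exp (-(x - y) ^ 2 / 2)) := by
        rw [integral_comp_mul_left_Ioi (fun x => f x * Real.exp (-(x - y) ^ 2 / 2)) y ha]
    _ = _ := by rw [smul_eq_mul]; ring

lemma subst_full (a : ℝ) (ha : 0 < a) (f : ℝ → ℝ) (y : ℝ) :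
    (∫ u, gfun a f u * phi a (u - y))
      = a⁻¹ * (Real.exp ((1 - a) * y ^ 2 / 2)
          * ∫ x, f x * Real.exp (-(x - y) ^ 2 / 2)) := by
  have h1 : ∀ u : ℝ, gfun a f u * phi a (u - y)
      = Real.exp ((1 - a) * y ^ 2 / 2)
          * ((fun x => f x * Real.exp (-(x - y) ^ 2 / 2)) (a * u)) := by
    intro u
    show Real.exp (a * (1 - a) * u ^ 2 / 2) * f (a * u) * Real.exp (-(a * (u - y) ^ 2) / 2)
        = Real.exp ((1 - a) * y ^ 2 / 2) * (f (a * u) * Real.exp (-(a * u - y) ^ 2 / 2))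
    exact exp_rearrange _ _ _ _ _ (by ring)
  calc (∫ u, gfun a f u * phi a (u - y))
      = ∫ u, Real.exp ((1 - a) * y ^ 2 / 2)
          * ((fun x => f x * Real.exp (-(x - y) ^ 2 / 2)) (a * u)) :=
        integral_congr_ae (Filter.Eventually.of_forall fun u => h1 u)
    _ = Real.exp ((1 - a) * y ^ 2 / 2)
          * ∫ u, (fun x => f x * Real.exp (-(x - y) ^ 2 / 2)) (a * u) :=
        integral_const_mul _ _
    _ = Real.exp ((1 - a) * y ^ 2 / 2)
          * (|a⁻¹| • ∫ x, f x * Real.exp (-(x - y) ^ 2 / 2)) := by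
        rw [Measure.integral_comp_mul_left (fun x => f x * Real.exp (-(x - y) ^ 2 / 2)) a]
    _ = _ := by
        rw [smul_eq_mul, abs_of_pos (inv_pos.2 ha)]; ring

lemma integrable_gauss_shift (a : ℝ) (ha : 0 < a) (c : ℝ) :
    Integrable (fun u : ℝ => Real.exp (a * (1 - a) * u ^ 2 / 2) * phi a (u - c)) := by
  have h0 : (0:ℝ) < a ^ 2 / 2 := by positivity
  have hint : Integrable (fun u : ℝ =>
      Real.exp ((1 - a) * c ^ 2 / 2) * Real.exp (-(a ^ 2 / 2) * (u - c / a) ^ 2)) :=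
    ((integrable_exp_neg_mul_sq h0).comp_sub_right (c / a)).const_mul _
  refine hint.congr (Filter.Eventually.of_forall fun u => ?_)
  show Real.exp ((1 - a) * c ^ 2 / 2) * Real.exp (-(a ^ 2 / 2) * (u - c / a) ^ 2)
      = Real.exp (a * (1 - a) * u ^ 2 / 2) * Real.exp (-(a * (u - c) ^ 2) / 2)
  rw [← Real.exp_add, ← Real.exp_add]
  congr 1
  have ha' : a ≠ 0 := ne_of_gt ha
  field_simp
  ring

lemma aemeasurable_comp_mul_left {f : ℝ → ℝ} (hf : AEMeasurable f volume) {a : ℝ} (ha : a ≠ 0) :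
    AEMeasurable (fun u => f (a * u)) volume := by
  have hq : Measure.QuasiMeasurePreserving (fun u : ℝ => a * u) volume volume := by
    refine ⟨measurable_id.const_mul a, ?_⟩
    rw [Real.map_volume_mul_left ha]
    exact Measure.absolutelyContinuous_of_le_smul le_rfl
  exact hf.comp_quasiMeasurePreserving hq

lemma aemeasurable_gfun (a : ℝ) (ha : 0 < a) {f : ℝ → ℝ} (hfInt : Integrable f) :
    AEMeasurable (gfun a f) volume := by
  have h1 : AEMeasurable (fun u => f (a * u)) volume :=
    aemeasurable_comp_mul_left hfInt.aemeasurable (ne_of_gt ha)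
  have h2 : Continuous fun u : ℝ => Real.exp (a * (1 - a) * u ^ 2 / 2) := by fun_prop
  exact h2.aemeasurable.mul h1

lemma integrable_g_phi (a M : ℝ) (ha : 0 < a) {f : ℝ → ℝ}
    (hf0 : ∀ x, 0 ≤ f x) (hfM : ∀ x, f x ≤ M) (hfInt : Integrable f) (y : ℝ) :
    Integrable (fun u => gfun a f u * phi a (u - y)) := by
  refine ((integrable_gauss_shift a ha y).const_mul M).mono'
    (((aemeasurable_gfun a ha hfInt).mul
      ((phi_cont a).comp (continuous_id.sub continuous_const)).aemeasurable).aestronglyMeasurable)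
    (Filter.Eventually.of_forall fun u => ?_)
  rw [Real.norm_eq_abs,
    abs_of_nonneg (mul_nonneg (gfun_nonneg a f hf0 u) (phi_nonneg _ _))]
  unfold gfun
  have hb : f (a * u) ≤ M := hfM _
  have h1 : Real.exp (a * (1 - a) * u ^ 2 / 2) * f (a * u) * phi a (u - y)
      ≤ Real.exp (a * (1 - a) * u ^ 2 / 2) * M * phi a (u - y) :=
    mul_le_mul_of_nonneg_right
      (mul_le_mul_of_nonneg_left hb (Real.exp_pos _).le) (phi_nonneg a (u - y))
  calc Real.exp (a * (1 - a) * u ^ 2 / 2) * f (a * u) * phi a (u - y)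
      ≤ Real.exp (a * (1 - a) * u ^ 2 / 2) * M * phi a (u - y) := h1
    _ = M * (Real.exp (a * (1 - a) * u ^ 2 / 2) * phi a (u - y)) := by ring

lemma integrable_g_Wf (a M : ℝ) (ha : 0 < a) {f : ℝ → ℝ}
    (hf0 : ∀ x, 0 ≤ f x) (hfM : ∀ x, f x ≤ M) (hfInt : Integrable f) (z : ℝ) :
    Integrable (fun u => gfun a f u * Wf a |u - z|) := by
  have hM0 : 0 ≤ M := le_trans (hf0 0) (hfM 0)
  refine ((integrable_gauss_shift a ha z).const_mul (M * Itot a)).mono'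
    (((aemeasurable_gfun a ha hfInt).mul
      (((Wf_antitone ha).measurable).comp
        ((continuous_id.sub continuous_const).abs.measurable)).aemeasurable).aestronglyMeasurable)
    (Filter.Eventually.of_forall fun u => ?_)
  rw [Real.norm_eq_abs,
    abs_of_nonneg (mul_nonneg (gfun_nonneg a f hf0 u) (Wf_nonneg _ _))]
  have hWd : Wf a |u - z| ≤ phi a (u - z) * Itot a := by
    have h := Wf_decay ha (abs_nonneg (u - z))
    have he : Real.exp (-(a * |u - z| ^ 2) / 2) = phi a (u - z) := by
      unfold phi; rw [sq_abs]
    rw [he] at h; exact h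
  have hg : gfun a f u ≤ M * Real.exp (a * (1 - a) * u ^ 2 / 2) := by
    unfold gfun
    calc Real.exp (a * (1 - a) * u ^ 2 / 2) * f (a * u)
        ≤ Real.exp (a * (1 - a) * u ^ 2 / 2) * M :=
          mul_le_mul_of_nonneg_left (hfM (a * u)) (Real.exp_pos _).le
      _ = M * Real.exp (a * (1 - a) * u ^ 2 / 2) := mul_comm _ _
  have h1 : gfun a f u * Wf a |u - z|
      ≤ (M * Real.exp (a * (1 - a) * u ^ 2 / 2)) * (phi a (u - z) * Itot a) := by
    refine mul_le_mul hg hWd (Wf_nonneg _ _) (by positivity)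
  calc gfun a f u * Wf a |u - z|
      ≤ (M * Real.exp (a * (1 - a) * u ^ 2 / 2)) * (phi a (u - z) * Itot a) := h1
    _ = M * Itot a * (Real.exp (a * (1 - a) * u ^ 2 / 2) * phi a (u - z)) := by ring

noncomputable def G1 (a : ℝ) (f : ℝ → ℝ) (y : ℝ) : ℝ :=
  ∫ u in Set.Ioi y, gfun a f u * phi a (u - y)
noncomputable def G2 (a : ℝ) (f : ℝ → ℝ) (y : ℝ) : ℝ :=
  ∫ u in Set.Iio y, gfun a f u * phi a (u - y)
noncomputable def Qfun (a : ℝ) (f : ℝ → ℝ) (c : ℝ) : ℝ≥0∞ :=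
  ∫⁻ u, ENNReal.ofReal (gfun a f u * Wf a |u - c|)

noncomputable def S1r (a α β u : ℝ) : ℝ := ∫ y in Set.Ioc α (min β u), phi a (u - y)
noncomputable def S2r (a α β u : ℝ) : ℝ := ∫ y in Set.Ioc (max α u) β, phi a (u - y)

lemma S1r_nonneg (a α β u : ℝ) : 0 ≤ S1r a α β u :=
  setIntegral_nonneg measurableSet_Ioc fun y _ => phi_nonneg _ _
lemma S2r_nonneg (a α β u : ℝ) : 0 ≤ S2r a α β u :=
  setIntegral_nonneg measurableSet_Ioc fun y _ => phi_nonneg _ _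

lemma wf_key {a : ℝ} (ha : 0 < a) {α β : ℝ} (hαβ : α ≤ β) (u : ℝ) :
    Wf a |u - β| + S2r a α β u = Wf a |u - α| + S1r a α β u := by
  rcases le_or_gt u α with h | h
  · have e1 : S1r a α β u = 0 := by
      unfold S1r
      rw [Set.Ioc_eq_empty (by intro hc; have := min_le_right β u; linarith)]
      simp
    have e2 : S2r a α β u = Wf a (u - β) - Wf a (u - α) := by
      unfold S2r
      rw [max_eq_left (by linarith : u ≤ α), slab' ha hαβ u]
    have h3 := Wsum ha (β - u)
    have h4 := Wsum ha (α - u)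
    rw [show -(β - u) = u - β by ring] at h3
    rw [show -(α - u) = u - α by ring] at h4
    rw [abs_of_nonpos (by linarith : u - β ≤ 0), abs_of_nonpos (by linarith : u - α ≤ 0)]
    rw [e1, e2, show -(u - β) = β - u by ring, show -(u - α) = α - u by ring]
    linarith
  · rcases le_or_gt β u with h2 | h2
    · have e1 : S1r a α β u = Wf a (u - β) - Wf a (u - α) := by
        unfold S1r
        rw [min_eq_left h2, slab' ha hαβ u]
      have e2 : S2r a α β u = 0 := by
        unfold S2r
        rw [max_eq_right h.le, Set.Ioc_eq_empty (by intro hc; linarith)]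
        simp
      rw [abs_of_nonneg (by linarith : (0:ℝ) ≤ u - β), abs_of_nonneg (by linarith : (0:ℝ) ≤ u - α)]
      rw [e1, e2]
      ring
    · have e1 : S1r a α β u = Wf a 0 - Wf a (u - α) := by
        unfold S1r
        rw [min_eq_right h2.le, slab' ha h.le u, sub_self]
      have e2 : S2r a α β u = Wf a (u - β) - Wf a 0 := by
        unfold S2r
        rw [max_eq_right h.le, slab' ha h2.le u, sub_self]
      have h3 := Wsum ha (β - u)
      rw [show -(β - u) = u - β by ring] at h3
      have h4 := Wsum ha 0
      rw [neg_zero] at h4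
      rw [abs_of_nonpos (by linarith : u - β ≤ 0), abs_of_nonneg (by linarith : (0:ℝ) ≤ u - α)]
      rw [e1, e2, show -(u - β) = β - u by ring]
      linarith

lemma tonelli_block (a M : ℝ) (ha : 0 < a) (ha1 : a < 1) (f : ℝ → ℝ)
    (hf0 : ∀ x, 0 ≤ f x) (hfM : ∀ x, f x ≤ M) (hfInt : Integrable f)
    (α β : ℝ) (hαβ : α ≤ β) :
    ∃ P1E P2E : ℝ → ℝ≥0∞, Measurable P1E ∧ Measurable P2E ∧
      (∀ y, P1E y = ENNReal.ofReal (G1 a f y)) ∧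
      (∀ y, P2E y = ENNReal.ofReal (G2 a f y)) ∧
      Qfun a f β + ∫⁻ y in Set.Ioc α β, P2E y
        = Qfun a f α + ∫⁻ y in Set.Ioc α β, P1E y := by
  classical
  have hgm : AEMeasurable (gfun a f) volume := aemeasurable_gfun a ha hfInt
  set g' : ℝ → ℝ := fun u => max (hgm.mk (gfun a f) u) 0 with hg'def
  have hg'meas : Measurable g' := hgm.measurable_mk.max measurable_const
  have hgg' : gfun a f =ᵐ[volume] g' := by
    filter_upwards [hgm.ae_eq_mk] with u hu
    rw [hg'def]
    simp only
    rw [← hu, max_eq_left (gfun_nonneg a f hf0 u)]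
  have hg'0 : ∀ u, 0 ≤ g' u := fun u => le_max_right _ _
  have hphic : Continuous fun p : ℝ × ℝ => phi a (p.2 - p.1) :=
    (phi_cont a).comp (continuous_snd.sub continuous_fst)
  have hKmeas : Measurable fun p : ℝ × ℝ => ENNReal.ofReal (g' p.2 * phi a (p.2 - p.1)) :=
    ((hg'meas.comp measurable_snd).mul hphic.measurable).ennreal_ofReal
  set S1 : Set (ℝ × ℝ) := {p | p.1 < p.2} with hS1def
  set S2 : Set (ℝ × ℝ) := {p | p.2 < p.1} with hS2def
  have hS1 : MeasurableSet S1 := measurableSet_lt measurable_fst measurable_snd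
  have hS2 : MeasurableSet S2 := measurableSet_lt measurable_snd measurable_fst
  set J1 : ℝ × ℝ → ℝ≥0∞ :=
    S1.indicator (fun p => ENNReal.ofReal (g' p.2 * phi a (p.2 - p.1))) with hJ1def
  set J2 : ℝ × ℝ → ℝ≥0∞ :=
    S2.indicator (fun p => ENNReal.ofReal (g' p.2 * phi a (p.2 - p.1))) with hJ2def
  have hJ1meas : Measurable J1 := hKmeas.indicator hS1
  have hJ2meas : Measurable J2 := hKmeas.indicator hS2
  have hgcongr : ∀ s : Set ℝ, ∀ y : ℝ,
      (∫⁻ u in s, ENNReal.ofReal (g' u * phi a (u - y)))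
        = ∫⁻ u in s, ENNReal.ofReal (gfun a f u * phi a (u - y)) := by
    intro s y
    refine lintegral_congr_ae ?_
    filter_upwards [ae_restrict_of_ae hgg'] with u hu
    rw [hu]
  -- identification of the slices in u
  have hslice1 : ∀ y, (fun u => J1 (y, u))
      = (Set.Ioi y).indicator (fun u => ENNReal.ofReal (g' u * phi a (u - y))) := by
    intro y; funext u
    by_cases h : y < u
    · rw [hJ1def, Set.indicator_of_mem (show (y,u) ∈ S1 from h),
        Set.indicator_of_mem (Set.mem_Ioi.2 h)]
    · rw [hJ1def, Set.indicator_of_notMem (show (y,u) ∉ S1 from h),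
        Set.indicator_of_notMem (fun hc => h (Set.mem_Ioi.1 hc))]
  have hslice2 : ∀ y, (fun u => J2 (y, u))
      = (Set.Iio y).indicator (fun u => ENNReal.ofReal (g' u * phi a (u - y))) := by
    intro y; funext u
    by_cases h : u < y
    · rw [hJ2def, Set.indicator_of_mem (show (y,u) ∈ S2 from h),
        Set.indicator_of_mem (Set.mem_Iio.2 h)]
    · rw [hJ2def, Set.indicator_of_notMem (show (y,u) ∉ S2 from h),
        Set.indicator_of_notMem (fun hc => h (Set.mem_Iio.1 hc))]
  have hP1 : ∀ y, (∫⁻ u, J1 (y, u)) = ENNReal.ofReal (G1 a f y) := by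
    intro y
    rw [hslice1 y, lintegral_indicator measurableSet_Ioi, hgcongr]
    rw [← ofReal_integral_eq_lintegral_ofReal
      ((integrable_g_phi a M ha hf0 hfM hfInt y).integrableOn)
      (Filter.Eventually.of_forall fun u =>
        mul_nonneg (gfun_nonneg a f hf0 u) (phi_nonneg _ _))]
    rfl
  have hP2 : ∀ y, (∫⁻ u, J2 (y, u)) = ENNReal.ofReal (G2 a f y) := by
    intro y
    rw [hslice2 y, lintegral_indicator measurableSet_Iio, hgcongr]
    rw [← ofReal_integral_eq_lintegral_ofReal
      ((integrable_g_phi a M ha hf0 hfM hfInt y).integrableOn)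
      (Filter.Eventually.of_forall fun u =>
        mul_nonneg (gfun_nonneg a f hf0 u) (phi_nonneg _ _))]
    rfl
  refine ⟨fun y => ∫⁻ u, J1 (y, u), fun y => ∫⁻ u, J2 (y, u),
    hJ1meas.lintegral_prod_right', hJ2meas.lintegral_prod_right', hP1, hP2, ?_⟩
  -- the exchange identity
  have hswap1 : (∫⁻ y in Set.Ioc α β, ∫⁻ u, J1 (y, u))
      = ∫⁻ u, ∫⁻ y in Set.Ioc α β, J1 (y, u) :=
    lintegral_lintegral_swap hJ1meas.aemeasurable
  have hswap2 : (∫⁻ y in Set.Ioc α β, ∫⁻ u, J2 (y, u))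
      = ∫⁻ u, ∫⁻ y in Set.Ioc α β, J2 (y, u) :=
    lintegral_lintegral_swap hJ2meas.aemeasurable
  have hofmul : ∀ u : ℝ, ∀ y : ℝ, ENNReal.ofReal (g' u * phi a (u - y))
      = ENNReal.ofReal (g' u) * ENNReal.ofReal (phi a (u - y)) := fun u y =>
    ENNReal.ofReal_mul (hg'0 u)
  have hinner1 : ∀ u : ℝ, (∫⁻ y in Set.Ioc α β, J1 (y, u))
      = ENNReal.ofReal (g' u) * ENNReal.ofReal (S1r a α β u) := by
    intro u
    have hre : (fun y => J1 (y, u))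
        = (Set.Iio u).indicator (fun y => ENNReal.ofReal (g' u * phi a (u - y))) := by
      funext y
      by_cases h : y < u
      · rw [hJ1def, Set.indicator_of_mem (show (y,u) ∈ S1 from h),
          Set.indicator_of_mem (Set.mem_Iio.2 h)]
      · rw [hJ1def, Set.indicator_of_notMem (show (y,u) ∉ S1 from h),
          Set.indicator_of_notMem (fun hc => h (Set.mem_Iio.1 hc))]
    have hset : volume.restrict (Set.Iio u ∩ Set.Ioc α β)
        = volume.restrict (Set.Ioc α (min β u)) := by
      apply Measure.restrict_congr_set
      rcases le_or_gt u α with h | h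
      · have e1 : Set.Iio u ∩ Set.Ioc α β = (∅ : Set ℝ) := by
          ext y
          simp only [Set.mem_inter_iff, Set.mem_Iio, Set.mem_Ioc, Set.mem_empty_iff_false,
            iff_false, not_and]
          intro hy hy2
          linarith
        have e2 : Set.Ioc α (min β u) = (∅ : Set ℝ) := by
          apply Set.Ioc_eq_empty
          intro hc
          have := min_le_right β u
          linarith
        rw [e1, e2]
        exact Filter.EventuallyEq.rfl
      · rcases le_or_gt u β with h2 | h2
        · have e1 : Set.Iio u ∩ Set.Ioc α β = Set.Ioo α u := by
            ext y
            simp only [Set.mem_inter_iff, Set.mem_Iio, Set.mem_Ioc, Set.mem_Ioo]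
            constructor
            · rintro ⟨hy1, hy2, _⟩; exact ⟨hy2, hy1⟩
            · rintro ⟨hy1, hy2⟩; exact ⟨hy2, hy1, by linarith⟩
          rw [e1, min_eq_right h2]
          exact Ioo_ae_eq_Ioc
        · have e1 : Set.Iio u ∩ Set.Ioc α β = Set.Ioc α β := by
            ext y
            simp only [Set.mem_inter_iff, Set.mem_Iio, Set.mem_Ioc]
            constructor
            · rintro ⟨_, hy⟩; exact hy
            · rintro ⟨hy1, hy2⟩; exact ⟨by linarith, hy1, hy2⟩
          rw [e1, min_eq_left h2.le]
          exact Filter.EventuallyEq.rfl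
    rw [hre, lintegral_indicator measurableSet_Iio,
      Measure.restrict_restrict measurableSet_Iio, hset]
    have hpt : (∫⁻ y in Set.Ioc α (min β u), ENNReal.ofReal (g' u * phi a (u - y)))
        = ∫⁻ y in Set.Ioc α (min β u),
            ENNReal.ofReal (g' u) * ENNReal.ofReal (phi a (u - y)) := by
      refine lintegral_congr fun y => hofmul u y
    rw [hpt, lintegral_const_mul' _ _ ENNReal.ofReal_ne_top]
    congr 1
    rw [← ofReal_integral_eq_lintegral_ofReal
      ((integrable_phi_sub ha u).integrableOn)
      (Filter.Eventually.of_forall fun y => phi_nonneg _ _)]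
    rfl
  have hinner2 : ∀ u : ℝ, (∫⁻ y in Set.Ioc α β, J2 (y, u))
      = ENNReal.ofReal (g' u) * ENNReal.ofReal (S2r a α β u) := by
    intro u
    have hre : (fun y => J2 (y, u))
        = (Set.Ioi u).indicator (fun y => ENNReal.ofReal (g' u * phi a (u - y))) := by
      funext y
      by_cases h : u < y
      · rw [hJ2def, Set.indicator_of_mem (show (y,u) ∈ S2 from h),
          Set.indicator_of_mem (Set.mem_Ioi.2 h)]
      · rw [hJ2def, Set.indicator_of_notMem (show (y,u) ∉ S2 from h),
          Set.indicator_of_notMem (fun hc => h (Set.mem_Ioi.1 hc))]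
    have hset : Set.Ioi u ∩ Set.Ioc α β = Set.Ioc (max α u) β := by
      ext y
      simp only [Set.mem_inter_iff, Set.mem_Ioi, Set.mem_Ioc, max_lt_iff]
      constructor
      · rintro ⟨hy1, hy2, hy3⟩; exact ⟨⟨hy2, hy1⟩, hy3⟩
      · rintro ⟨⟨hy1, hy2⟩, hy3⟩; exact ⟨hy2, hy1, hy3⟩
    rw [hre, lintegral_indicator measurableSet_Ioi,
      Measure.restrict_restrict measurableSet_Ioi, hset]
    have hpt : (∫⁻ y in Set.Ioc (max α u) β, ENNReal.ofReal (g' u * phi a (u - y)))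
        = ∫⁻ y in Set.Ioc (max α u) β,
            ENNReal.ofReal (g' u) * ENNReal.ofReal (phi a (u - y)) := by
      refine lintegral_congr fun y => hofmul u y
    rw [hpt, lintegral_const_mul' _ _ ENNReal.ofReal_ne_top]
    congr 1
    rw [← ofReal_integral_eq_lintegral_ofReal
      ((integrable_phi_sub ha u).integrableOn)
      (Filter.Eventually.of_forall fun y => phi_nonneg _ _)]
    rfl
  have hQside : ∀ c : ℝ, Qfun a f c
      = ∫⁻ u, ENNReal.ofReal (g' u) * ENNReal.ofReal (Wf a |u - c|) := by
    intro c
    refine lintegral_congr_ae ?_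
    filter_upwards [hgg'] with u hu
    rw [ENNReal.ofReal_mul (gfun_nonneg a f hf0 u), hu]
  have hmeasWf : ∀ c : ℝ, Measurable fun u =>
      ENNReal.ofReal (g' u) * ENNReal.ofReal (Wf a |u - c|) := by
    intro c
    exact (hg'meas.ennreal_ofReal).mul
      (((Wf_antitone ha).measurable).comp
        ((continuous_id.sub continuous_const).abs.measurable)).ennreal_ofReal
  have hmaster : (∫⁻ u, ENNReal.ofReal (g' u) * ENNReal.ofReal (Wf a |u - β|))
        + (∫⁻ u, ENNReal.ofReal (g' u) * ENNReal.ofReal (S2r a α β u))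
      = (∫⁻ u, ENNReal.ofReal (g' u) * ENNReal.ofReal (Wf a |u - α|))
        + (∫⁻ u, ENNReal.ofReal (g' u) * ENNReal.ofReal (S1r a α β u)) := by
    rw [← lintegral_add_left (hmeasWf β), ← lintegral_add_left (hmeasWf α)]
    refine lintegral_congr fun u => ?_
    rw [← mul_add, ← mul_add,
      ← ENNReal.ofReal_add (Wf_nonneg _ _) (S2r_nonneg a α β u),
      ← ENNReal.ofReal_add (Wf_nonneg _ _) (S1r_nonneg a α β u),
      wf_key ha hαβ u]
  calc Qfun a f β + ∫⁻ y in Set.Ioc α β, ∫⁻ u, J2 (y, u)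
      = (∫⁻ u, ENNReal.ofReal (g' u) * ENNReal.ofReal (Wf a |u - β|))
        + ∫⁻ u, ENNReal.ofReal (g' u) * ENNReal.ofReal (S2r a α β u) := by
        rw [hQside β, hswap2]
        congr 1
        exact lintegral_congr hinner2
    _ = (∫⁻ u, ENNReal.ofReal (g' u) * ENNReal.ofReal (Wf a |u - α|))
        + ∫⁻ u, ENNReal.ofReal (g' u) * ENNReal.ofReal (S1r a α β u) := hmaster
    _ = Qfun a f α + ∫⁻ y in Set.Ioc α β, ∫⁻ u, J1 (y, u) := by
        rw [hQside α, hswap1]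
        congr 1
        exact (lintegral_congr hinner1).symm

noncomputable def rho (a δ : ℝ) (ψ : ℝ → ℝ) (y : ℝ) : ℝ :=
  Real.exp ((1 - a) * y ^ 2 / 2 -
    sInf ((fun x => (x - y) ^ 2 / 2) '' Set.Icc (a * y - δ) (a * y + δ))) * |a * y - ψ y|

lemma rho_nonneg (a δ : ℝ) (ψ : ℝ → ℝ) (y : ℝ) : 0 ≤ rho a δ ψ y :=
  mul_nonneg (Real.exp_pos _).le (abs_nonneg _)

lemma integrable_F {f : ℝ → ℝ} (hfInt : Integrable f) (y : ℝ) :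
    Integrable (fun x => f x * Real.exp (-(x - y) ^ 2 / 2)) := by
  have hcont : Continuous fun x : ℝ => Real.exp (-(x - y) ^ 2 / 2) := by fun_prop
  refine hfInt.abs.mono'
    (hfInt.aestronglyMeasurable.mul hcont.aestronglyMeasurable)
    (Filter.Eventually.of_forall fun x => ?_)
  rw [Real.norm_eq_abs, abs_mul, abs_of_nonneg (Real.exp_pos _).le]
  exact mul_le_of_le_one_right (abs_nonneg _)
    (Real.exp_le_one_iff.2 (by nlinarith [sq_nonneg (x - y)]))

lemma T_le_one {f : ℝ → ℝ} (hf0 : ∀ x, 0 ≤ f x) (hfInt : Integrable f)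
    (hfTot : ∫ x, f x = 1) (y : ℝ) :
    (∫ x, f x * Real.exp (-(x - y) ^ 2 / 2)) ≤ 1 := by
  rw [← hfTot]
  refine integral_mono (integrable_F hfInt y) hfInt fun x => ?_
  exact mul_le_of_le_one_right (hf0 x)
    (Real.exp_le_one_iff.2 (by nlinarith [sq_nonneg (x - y)]))

lemma Iplus_le {f : ℝ → ℝ} (hf0 : ∀ x, 0 ≤ f x) (hfInt : Integrable f)
    (hfTot : ∫ x, f x = 1) (c y : ℝ) :
    (∫ x in Set.Ioi c, f x * Real.exp (-(x - y) ^ 2 / 2)) ≤ 1 := by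
  refine le_trans ?_ (T_le_one hf0 hfInt hfTot y)
  refine setIntegral_le_integral (integrable_F hfInt y)
    (Filter.Eventually.of_forall fun x => mul_nonneg (hf0 x) (Real.exp_pos _).le)

lemma Iminus_le {f : ℝ → ℝ} (hf0 : ∀ x, 0 ≤ f x) (hfInt : Integrable f)
    (hfTot : ∫ x, f x = 1) (c y : ℝ) :
    (∫ x in Set.Iio c, f x * Real.exp (-(x - y) ^ 2 / 2)) ≤ 1 := by
  refine le_trans ?_ (T_le_one hf0 hfInt hfTot y)
  refine setIntegral_le_integral (integrable_F hfInt y)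
    (Filter.Eventually.of_forall fun x => mul_nonneg (hf0 x) (Real.exp_pos _).le)

lemma G1_formula (a M : ℝ) (ha : 0 < a) {f : ℝ → ℝ}
    (hf0 : ∀ x, 0 ≤ f x) (hfM : ∀ x, f x ≤ M) (hfInt : Integrable f) (y : ℝ) :
    G1 a f y = a⁻¹ * (Real.exp ((1 - a) * y ^ 2 / 2)
      * ∫ x in Set.Ioi (a * y), f x * Real.exp (-(x - y) ^ 2 / 2)) :=
  subst_Ioi a ha f y

lemma G2_formula (a M : ℝ) (ha : 0 < a) {f : ℝ → ℝ}
    (hf0 : ∀ x, 0 ≤ f x) (hfM : ∀ x, f x ≤ M) (hfInt : Integrable f) (y : ℝ) :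
    G2 a f y = a⁻¹ * (Real.exp ((1 - a) * y ^ 2 / 2)
      * ∫ x in Set.Iio (a * y), f x * Real.exp (-(x - y) ^ 2 / 2)) := by
  have hgint := integrable_g_phi a M ha hf0 hfM hfInt y
  have hFint := integrable_F hfInt y
  have hu1 : (∫ u in Set.Iic y, gfun a f u * phi a (u - y))
      + ∫ u in Set.Ioi y, gfun a f u * phi a (u - y)
      = ∫ u, gfun a f u * phi a (u - y) := integral_Iic_add_Ioi' hgint
  have hu2 : (∫ u in Set.Iic y, gfun a f u * phi a (u - y))
      = ∫ u in Set.Iio y, gfun a f u * phi a (u - y) := integral_Iic_eq_integral_Iio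
  have hx1 : (∫ x in Set.Iic (a * y), f x * Real.exp (-(x - y) ^ 2 / 2))
      + ∫ x in Set.Ioi (a * y), f x * Real.exp (-(x - y) ^ 2 / 2)
      = ∫ x, f x * Real.exp (-(x - y) ^ 2 / 2) := integral_Iic_add_Ioi' hFint
  have hx2 : (∫ x in Set.Iic (a * y), f x * Real.exp (-(x - y) ^ 2 / 2))
      = ∫ x in Set.Iio (a * y), f x * Real.exp (-(x - y) ^ 2 / 2) := integral_Iic_eq_integral_Iio
  have hfull := subst_full a ha f y
  have hioi := subst_Ioi a ha f y
  rw [hu2] at hu1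
  rw [hx2] at hx1
  unfold G2
  linear_combination hu1 + hfull - hioi - (a⁻¹ * Real.exp ((1 - a) * y ^ 2 / 2)) * hx1

lemma G1_nonneg (a : ℝ) {f : ℝ → ℝ} (hf0 : ∀ x, 0 ≤ f x) (y : ℝ) : 0 ≤ G1 a f y :=
  setIntegral_nonneg measurableSet_Ioi fun u _ =>
    mul_nonneg (gfun_nonneg a f hf0 u) (phi_nonneg _ _)

lemma G2_nonneg (a : ℝ) {f : ℝ → ℝ} (hf0 : ∀ x, 0 ≤ f x) (y : ℝ) : 0 ≤ G2 a f y :=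
  setIntegral_nonneg measurableSet_Iio fun u _ =>
    mul_nonneg (gfun_nonneg a f hf0 u) (phi_nonneg _ _)

lemma G1_le (a M : ℝ) (ha : 0 < a) {f : ℝ → ℝ}
    (hf0 : ∀ x, 0 ≤ f x) (hfM : ∀ x, f x ≤ M) (hfInt : Integrable f)
    (hfTot : ∫ x, f x = 1) (y : ℝ) :
    G1 a f y ≤ a⁻¹ * Real.exp ((1 - a) * y ^ 2 / 2) := by
  rw [G1_formula a M ha hf0 hfM hfInt y]
  have h1 := Iplus_le hf0 hfInt hfTot (a * y) y
  have h2 := (Real.exp_pos ((1 - a) * y ^ 2 / 2)).le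
  have h3 : (0:ℝ) ≤ a⁻¹ := (inv_pos.2 ha).le
  calc a⁻¹ * (Real.exp ((1 - a) * y ^ 2 / 2)
        * ∫ x in Set.Ioi (a * y), f x * Real.exp (-(x - y) ^ 2 / 2))
      = (a⁻¹ * Real.exp ((1 - a) * y ^ 2 / 2))
        * ∫ x in Set.Ioi (a * y), f x * Real.exp (-(x - y) ^ 2 / 2) := by ring
    _ ≤ (a⁻¹ * Real.exp ((1 - a) * y ^ 2 / 2)) * 1 :=
        mul_le_mul_of_nonneg_left h1 (mul_nonneg h3 h2)
    _ = a⁻¹ * Real.exp ((1 - a) * y ^ 2 / 2) := by ring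

lemma G2_le (a M : ℝ) (ha : 0 < a) {f : ℝ → ℝ}
    (hf0 : ∀ x, 0 ≤ f x) (hfM : ∀ x, f x ≤ M) (hfInt : Integrable f)
    (hfTot : ∫ x, f x = 1) (y : ℝ) :
    G2 a f y ≤ a⁻¹ * Real.exp ((1 - a) * y ^ 2 / 2) := by
  rw [G2_formula a M ha hf0 hfM hfInt y]
  have h1 := Iminus_le hf0 hfInt hfTot (a * y) y
  have h2 := (Real.exp_pos ((1 - a) * y ^ 2 / 2)).le
  have h3 : (0:ℝ) ≤ a⁻¹ := (inv_pos.2 ha).le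
  calc a⁻¹ * (Real.exp ((1 - a) * y ^ 2 / 2)
        * ∫ x in Set.Iio (a * y), f x * Real.exp (-(x - y) ^ 2 / 2))
      = (a⁻¹ * Real.exp ((1 - a) * y ^ 2 / 2))
        * ∫ x in Set.Iio (a * y), f x * Real.exp (-(x - y) ^ 2 / 2) := by ring
    _ ≤ (a⁻¹ * Real.exp ((1 - a) * y ^ 2 / 2)) * 1 :=
        mul_le_mul_of_nonneg_left h1 (mul_nonneg h3 h2)
    _ = a⁻¹ * Real.exp ((1 - a) * y ^ 2 / 2) := by ring

lemma G_diff_bound (a δ M : ℝ) (ha : 0 < a) (hδ : 0 ≤ δ) {f ψ : ℝ → ℝ}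
    (hf0 : ∀ x, 0 ≤ f x) (hfM : ∀ x, f x ≤ M) (hfInt : Integrable f)
    (hmed : ∀ y : ℝ, ∫ x in Set.Iic (ψ y), f x * Real.exp (-(x - y) ^ 2 / 2)
        = (1 / 2) * ∫ x, f x * Real.exp (-(x - y) ^ 2 / 2))
    (hsup : ∀ y : ℝ, |a * y - ψ y| ≤ δ) (y : ℝ) :
    |G1 a f y - G2 a f y| ≤ 2 * M * a⁻¹ * rho a δ ψ y := by
  have hmb := median_bound a δ M hδ f ψ hf0 hfM hfInt hmed hsup y
  rw [G1_formula a M ha hf0 hfM hfInt y, G2_formula a M ha hf0 hfM hfInt y]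
  have hd : a⁻¹ * (Real.exp ((1 - a) * y ^ 2 / 2)
        * ∫ x in Set.Ioi (a * y), f x * Real.exp (-(x - y) ^ 2 / 2))
      - a⁻¹ * (Real.exp ((1 - a) * y ^ 2 / 2)
        * ∫ x in Set.Iio (a * y), f x * Real.exp (-(x - y) ^ 2 / 2))
      = a⁻¹ * Real.exp ((1 - a) * y ^ 2 / 2)
        * ((∫ x in Set.Ioi (a * y), f x * Real.exp (-(x - y) ^ 2 / 2))
          - ∫ x in Set.Iio (a * y), f x * Real.exp (-(x - y) ^ 2 / 2)) := by ring
  rw [hd, abs_mul, abs_of_nonneg (mul_nonneg (inv_pos.2 ha).le (Real.exp_pos _).le)]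
  have hstep : a⁻¹ * Real.exp ((1 - a) * y ^ 2 / 2)
      * |(∫ x in Set.Ioi (a * y), f x * Real.exp (-(x - y) ^ 2 / 2))
          - ∫ x in Set.Iio (a * y), f x * Real.exp (-(x - y) ^ 2 / 2)|
      ≤ a⁻¹ * Real.exp ((1 - a) * y ^ 2 / 2)
        * (2 * M * Real.exp (-sInf ((fun x => (x - y) ^ 2 / 2)
            '' Set.Icc (a * y - δ) (a * y + δ))) * |a * y - ψ y|) :=
    mul_le_mul_of_nonneg_left hmb (mul_nonneg (inv_pos.2 ha).le (Real.exp_pos _).le)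
  refine le_trans hstep (le_of_eq ?_)
  unfold rho
  rw [Real.exp_sub]
  rw [Real.exp_neg]
  field_simp

lemma gfun_le (a M : ℝ) {f : ℝ → ℝ} (hfM : ∀ x, f x ≤ M) (u : ℝ) :
    gfun a f u ≤ M * Real.exp (a * (1 - a) * u ^ 2 / 2) := by
  unfold gfun
  calc Real.exp (a * (1 - a) * u ^ 2 / 2) * f (a * u)
      ≤ Real.exp (a * (1 - a) * u ^ 2 / 2) * M :=
        mul_le_mul_of_nonneg_left (hfM (a * u)) (Real.exp_pos _).le
    _ = M * Real.exp (a * (1 - a) * u ^ 2 / 2) := mul_comm _ _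

lemma Q0_bound (a M : ℝ) (ha : 0 < a) (ha1 : a < 1) {f : ℝ → ℝ}
    (hf0 : ∀ x, 0 ≤ f x) (hfM : ∀ x, f x ≤ M) (hfInt : Integrable f) :
    Qfun a f 0 ≤ ENNReal.ofReal (M * Itot a * Itot (a ^ 2)) := by
  have hM0 : 0 ≤ M := le_trans (hf0 0) (hfM 0)
  have ha2 : (0:ℝ) < a ^ 2 := by positivity
  have hpt : ∀ u : ℝ, gfun a f u * Wf a |u - 0| ≤ M * Itot a * phi (a ^ 2) u := by
    intro u
    rw [sub_zero]
    have hWd : Wf a |u| ≤ phi a u * Itot a := by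
      have h := Wf_decay ha (abs_nonneg u)
      have he : Real.exp (-(a * |u| ^ 2) / 2) = phi a u := by
        unfold phi; rw [sq_abs]
      rw [he] at h; exact h
    have h1 : gfun a f u * Wf a |u|
        ≤ (M * Real.exp (a * (1 - a) * u ^ 2 / 2)) * (phi a u * Itot a) :=
      mul_le_mul (gfun_le a M hfM u) hWd (Wf_nonneg _ _)
        (by positivity)
    refine le_trans h1 (le_of_eq ?_)
    have he2 : Real.exp (a * (1 - a) * u ^ 2 / 2) * phi a u = phi (a ^ 2) u := by
      unfold phi
      rw [← Real.exp_add]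
      congr 1
      ring
    calc (M * Real.exp (a * (1 - a) * u ^ 2 / 2)) * (phi a u * Itot a)
        = M * Itot a * (Real.exp (a * (1 - a) * u ^ 2 / 2) * phi a u) := by ring
      _ = M * Itot a * phi (a ^ 2) u := by rw [he2]
  have hint : Integrable (fun u => M * Itot a * phi (a ^ 2) u) :=
    (integrable_phi ha2).const_mul _
  calc Qfun a f 0 ≤ ∫⁻ u, ENNReal.ofReal (M * Itot a * phi (a ^ 2) u) :=
        lintegral_mono fun u => ENNReal.ofReal_le_ofReal (hpt u)
    _ = ENNReal.ofReal (∫ u, M * Itot a * phi (a ^ 2) u) :=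
        (ofReal_integral_eq_lintegral_ofReal hint
          (Filter.Eventually.of_forall fun u =>
            mul_nonneg (mul_nonneg hM0 (Itot_nonneg ha)) (phi_nonneg _ _))).symm
    _ = ENNReal.ofReal (M * Itot a * Itot (a ^ 2)) := by
        rw [integral_const_mul]
        rfl

theorem stmt_15 (a ε B M : ℝ) (ha : 0 < a) (ha1 : a < 1) (hε : 0 ≤ ε) :
    ∃ C₀ : ℝ, ∀ (f ψ : ℝ → ℝ),
      (∀ x, 0 ≤ f x) → (∀ x, f x ≤ M) → Integrable f → (∫ x, f x = 1) →
      (∀ y : ℝ, ∫ x in Set.Iic (ψ y), f x * Real.exp (-(x - y) ^ 2 / 2)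
          = (1 / 2) * ∫ x, f x * Real.exp (-(x - y) ^ 2 / 2)) →
      (∀ y : ℝ, |a * y - ψ y| ≤ Real.sqrt (2 * a * ε)) →
      (∫⁻ y : ℝ, ENNReal.ofReal
          (Real.exp ((1 - a) * y ^ 2 / 2 -
              sInf ((fun x => (x - y) ^ 2 / 2) ''
                Set.Icc (a * y - Real.sqrt (2 * a * ε)) (a * y + Real.sqrt (2 * a * ε)))) *
            |a * y - ψ y|) ≤ ENNReal.ofReal B) →
      ∀ z : ℝ,
        ∫⁻ x in Set.Icc (z - 1 / 2) (z + 1 / 2),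
            ENNReal.ofReal (Real.exp (a * (1 - a) * x ^ 2 / 2) * f (a * x))
          ≤ ENNReal.ofReal C₀ := by
  refine ⟨(M * Itot a * Itot (a ^ 2) + 2 * M * a⁻¹ * max B 0) / Wf a (1/2), ?_⟩
  intro f ψ hf0 hfM hfInt hfTot hmed hsup hB z
  have hM0 : 0 ≤ M := le_trans (hf0 0) (hfM 0)
  set δ : ℝ := Real.sqrt (2 * a * ε) with hδdef
  have hδ0 : 0 ≤ δ := Real.sqrt_nonneg _
  have hB' : (∫⁻ y, ENNReal.ofReal (rho a δ ψ y)) ≤ ENNReal.ofReal B := hB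
  have hc0 : (0:ℝ) ≤ 2 * M * a⁻¹ := by positivity
  -- the rho-term bound, for any interval
  have hRterm : ∀ s : Set ℝ, (∫⁻ y in s, ENNReal.ofReal (2 * M * a⁻¹ * rho a δ ψ y))
      ≤ ENNReal.ofReal (2 * M * a⁻¹) * ENNReal.ofReal (max B 0) := by
    intro s
    have h1 : (∫⁻ y in s, ENNReal.ofReal (2 * M * a⁻¹ * rho a δ ψ y))
        = ENNReal.ofReal (2 * M * a⁻¹) * ∫⁻ y in s, ENNReal.ofReal (rho a δ ψ y) := by
      rw [← lintegral_const_mul' _ _ ENNReal.ofReal_ne_top]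
      refine lintegral_congr fun y => ?_
      rw [← ENNReal.ofReal_mul hc0]
    rw [h1]
    refine mul_le_mul_right ?_ _
    refine le_trans (setLIntegral_le_lintegral _ _) (le_trans hB' ?_)
    exact ENNReal.ofReal_le_ofReal (le_max_left B 0)
  -- pointwise comparisons both ways
  have hpt12 : ∀ y, ENNReal.ofReal (G1 a f y)
      ≤ ENNReal.ofReal (G2 a f y) + ENNReal.ofReal (2 * M * a⁻¹ * rho a δ ψ y) := by
    intro y
    have hd := (abs_le.1 (G_diff_bound a δ M ha hδ0 hf0 hfM hfInt hmed hsup y)).2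
    calc ENNReal.ofReal (G1 a f y)
        ≤ ENNReal.ofReal (G2 a f y + 2 * M * a⁻¹ * rho a δ ψ y) :=
          ENNReal.ofReal_le_ofReal (by linarith)
      _ ≤ _ := ENNReal.ofReal_add_le
  have hpt21 : ∀ y, ENNReal.ofReal (G2 a f y)
      ≤ ENNReal.ofReal (G1 a f y) + ENNReal.ofReal (2 * M * a⁻¹ * rho a δ ψ y) := by
    intro y
    have hd := (abs_le.1 (G_diff_bound a δ M ha hδ0 hf0 hfM hfInt hmed hsup y)).1
    calc ENNReal.ofReal (G2 a f y)
        ≤ ENNReal.ofReal (G1 a f y + 2 * M * a⁻¹ * rho a δ ψ y) :=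
          ENNReal.ofReal_le_ofReal (by linarith)
      _ ≤ _ := ENNReal.ofReal_add_le
  -- main comparison of Qfun z with Qfun 0
  have hQz : Qfun a f z ≤ Qfun a f 0
      + ENNReal.ofReal (2 * M * a⁻¹) * ENNReal.ofReal (max B 0) := by
    rcases le_total 0 z with hz | hz
    · obtain ⟨P1E, P2E, hm1, hm2, he1, he2, heq⟩ :=
        tonelli_block a M ha ha1 f hf0 hfM hfInt 0 z hz
      have hfin : (∫⁻ y in Set.Ioc 0 z, P2E y) ≠ ⊤ := by
        have hb : ∀ y ∈ Set.Ioc (0:ℝ) z, P2E y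
            ≤ ENNReal.ofReal (a⁻¹ * Real.exp ((1 - a) * z ^ 2 / 2)) := by
          intro y hy
          rw [he2 y]
          refine ENNReal.ofReal_le_ofReal ?_
          refine le_trans (G2_le a M ha hf0 hfM hfInt hfTot y) ?_
          refine mul_le_mul_of_nonneg_left ?_ (inv_pos.2 ha).le
          apply Real.exp_le_exp.2
          have h1 : y ^ 2 ≤ z ^ 2 := by nlinarith [hy.1, hy.2]
          nlinarith
        have hle : (∫⁻ y in Set.Ioc 0 z, P2E y)
            ≤ ∫⁻ _y in Set.Ioc 0 z, ENNReal.ofReal (a⁻¹ * Real.exp ((1 - a) * z ^ 2 / 2)) :=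
          setLIntegral_mono measurable_const hb
        refine ne_top_of_le_ne_top ?_ hle
        rw [setLIntegral_const]
        exact ENNReal.mul_ne_top ENNReal.ofReal_ne_top (by rw [Real.volume_Ioc]; exact ENNReal.ofReal_ne_top)
      have hle : (∫⁻ y in Set.Ioc 0 z, P1E y)
          ≤ (∫⁻ y in Set.Ioc 0 z, P2E y)
            + ENNReal.ofReal (2 * M * a⁻¹) * ENNReal.ofReal (max B 0) := by
        calc (∫⁻ y in Set.Ioc 0 z, P1E y)
            ≤ ∫⁻ y in Set.Ioc 0 z, (P2E y + ENNReal.ofReal (2 * M * a⁻¹ * rho a δ ψ y)) := by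
              refine lintegral_mono fun y => ?_
              rw [he1 y, he2 y]
              exact hpt12 y
          _ = (∫⁻ y in Set.Ioc 0 z, P2E y)
              + ∫⁻ y in Set.Ioc 0 z, ENNReal.ofReal (2 * M * a⁻¹ * rho a δ ψ y) :=
              lintegral_add_left hm2 _
          _ ≤ _ := add_le_add_right (hRterm _) _
      have hchain : Qfun a f z + ∫⁻ y in Set.Ioc 0 z, P2E y
          ≤ (Qfun a f 0 + ENNReal.ofReal (2 * M * a⁻¹) * ENNReal.ofReal (max B 0))
            + ∫⁻ y in Set.Ioc 0 z, P2E y := by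
        calc Qfun a f z + ∫⁻ y in Set.Ioc 0 z, P2E y
            = Qfun a f 0 + ∫⁻ y in Set.Ioc 0 z, P1E y := heq
          _ ≤ Qfun a f 0 + ((∫⁻ y in Set.Ioc 0 z, P2E y)
              + ENNReal.ofReal (2 * M * a⁻¹) * ENNReal.ofReal (max B 0)) :=
              add_le_add_right hle _
          _ = (Qfun a f 0 + ENNReal.ofReal (2 * M * a⁻¹) * ENNReal.ofReal (max B 0))
              + ∫⁻ y in Set.Ioc 0 z, P2E y := by ring
      exact (ENNReal.add_le_add_iff_right hfin).1 hchain
    · obtain ⟨P1E, P2E, hm1, hm2, he1, he2, heq⟩ :=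
        tonelli_block a M ha ha1 f hf0 hfM hfInt z 0 hz
      have hfin : (∫⁻ y in Set.Ioc z 0, P1E y) ≠ ⊤ := by
        have hb : ∀ y ∈ Set.Ioc z (0:ℝ), P1E y
            ≤ ENNReal.ofReal (a⁻¹ * Real.exp ((1 - a) * z ^ 2 / 2)) := by
          intro y hy
          rw [he1 y]
          refine ENNReal.ofReal_le_ofReal ?_
          refine le_trans (G1_le a M ha hf0 hfM hfInt hfTot y) ?_
          refine mul_le_mul_of_nonneg_left ?_ (inv_pos.2 ha).le
          apply Real.exp_le_exp.2
          have h1 : y ^ 2 ≤ z ^ 2 := by nlinarith [hy.1, hy.2]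
          nlinarith
        have hle : (∫⁻ y in Set.Ioc z 0, P1E y)
            ≤ ∫⁻ _y in Set.Ioc z 0, ENNReal.ofReal (a⁻¹ * Real.exp ((1 - a) * z ^ 2 / 2)) :=
          setLIntegral_mono measurable_const hb
        refine ne_top_of_le_ne_top ?_ hle
        rw [setLIntegral_const]
        exact ENNReal.mul_ne_top ENNReal.ofReal_ne_top (by rw [Real.volume_Ioc]; exact ENNReal.ofReal_ne_top)
      have hle : (∫⁻ y in Set.Ioc z 0, P2E y)
          ≤ (∫⁻ y in Set.Ioc z 0, P1E y)
            + ENNReal.ofReal (2 * M * a⁻¹) * ENNReal.ofReal (max B 0) := by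
        calc (∫⁻ y in Set.Ioc z 0, P2E y)
            ≤ ∫⁻ y in Set.Ioc z 0, (P1E y + ENNReal.ofReal (2 * M * a⁻¹ * rho a δ ψ y)) := by
              refine lintegral_mono fun y => ?_
              rw [he1 y, he2 y]
              exact hpt21 y
          _ = (∫⁻ y in Set.Ioc z 0, P1E y)
              + ∫⁻ y in Set.Ioc z 0, ENNReal.ofReal (2 * M * a⁻¹ * rho a δ ψ y) :=
              lintegral_add_left hm1 _
          _ ≤ _ := add_le_add_right (hRterm _) _
      have hchain : Qfun a f z + ∫⁻ y in Set.Ioc z 0, P1E y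
          ≤ (Qfun a f 0 + ENNReal.ofReal (2 * M * a⁻¹) * ENNReal.ofReal (max B 0))
            + ∫⁻ y in Set.Ioc z 0, P1E y := by
        calc Qfun a f z + ∫⁻ y in Set.Ioc z 0, P1E y
            = Qfun a f 0 + ∫⁻ y in Set.Ioc z 0, P2E y := heq.symm
          _ ≤ Qfun a f 0 + ((∫⁻ y in Set.Ioc z 0, P1E y)
              + ENNReal.ofReal (2 * M * a⁻¹) * ENNReal.ofReal (max B 0)) :=
              add_le_add_right hle _
          _ = (Qfun a f 0 + ENNReal.ofReal (2 * M * a⁻¹) * ENNReal.ofReal (max B 0))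
              + ∫⁻ y in Set.Ioc z 0, P1E y := by ring
      exact (ENNReal.add_le_add_iff_right hfin).1 hchain
  -- window bound
  have hw0 : ENNReal.ofReal (Wf a (1/2)) ≠ 0 := (ENNReal.ofReal_pos.2 (Wf_half_pos ha)).ne'
  have hwT : ENNReal.ofReal (Wf a (1/2)) ≠ ⊤ := ENNReal.ofReal_ne_top
  have hwin : ENNReal.ofReal (Wf a (1/2))
      * (∫⁻ x in Set.Icc (z - 1/2) (z + 1/2), ENNReal.ofReal (gfun a f x)) ≤ Qfun a f z := by
    calc ENNReal.ofReal (Wf a (1/2))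
        * (∫⁻ x in Set.Icc (z - 1/2) (z + 1/2), ENNReal.ofReal (gfun a f x))
        = ∫⁻ x in Set.Icc (z - 1/2) (z + 1/2),
            ENNReal.ofReal (Wf a (1/2)) * ENNReal.ofReal (gfun a f x) :=
          (lintegral_const_mul' _ _ hwT).symm
      _ ≤ ∫⁻ x in Set.Icc (z - 1/2) (z + 1/2), ENNReal.ofReal (gfun a f x * Wf a |x - z|) := by
          refine lintegral_mono_ae ?_
          filter_upwards [ae_restrict_mem measurableSet_Icc] with x hx
          rw [← ENNReal.ofReal_mul (Wf_nonneg a (1/2))]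
          refine ENNReal.ofReal_le_ofReal ?_
          have habs : |x - z| ≤ 1/2 := abs_le.2 ⟨by linarith [hx.1], by linarith [hx.2]⟩
          have hWle : Wf a (1/2) ≤ Wf a |x - z| := Wf_antitone ha habs
          calc Wf a (1/2) * gfun a f x ≤ Wf a |x - z| * gfun a f x :=
              mul_le_mul_of_nonneg_right hWle (gfun_nonneg a f hf0 x)
            _ = gfun a f x * Wf a |x - z| := mul_comm _ _
      _ ≤ Qfun a f z := setLIntegral_le_lintegral _ _
  show (∫⁻ x in Set.Icc (z - 1/2) (z + 1/2), ENNReal.ofReal (gfun a f x))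
      ≤ ENNReal.ofReal ((M * Itot a * Itot (a ^ 2) + 2 * M * a⁻¹ * max B 0) / Wf a (1/2))
  have h1 : (∫⁻ x in Set.Icc (z - 1/2) (z + 1/2), ENNReal.ofReal (gfun a f x))
      ≤ Qfun a f z / ENNReal.ofReal (Wf a (1/2)) := by
    refine (ENNReal.le_div_iff_mul_le (Or.inl hw0) (Or.inl hwT)).2 ?_
    rw [mul_comm]
    exact hwin
  have h2 : Qfun a f z
      ≤ ENNReal.ofReal (M * Itot a * Itot (a ^ 2) + 2 * M * a⁻¹ * max B 0) := by
    have hnn1 : (0:ℝ) ≤ M * Itot a * Itot (a ^ 2) :=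
      mul_nonneg (mul_nonneg hM0 (Itot_nonneg ha)) (Itot_nonneg (by positivity))
    have hnn2 : (0:ℝ) ≤ 2 * M * a⁻¹ * max B 0 := mul_nonneg hc0 (le_max_right B 0)
    calc Qfun a f z
        ≤ Qfun a f 0 + ENNReal.ofReal (2 * M * a⁻¹) * ENNReal.ofReal (max B 0) := hQz
      _ ≤ ENNReal.ofReal (M * Itot a * Itot (a ^ 2))
          + ENNReal.ofReal (2 * M * a⁻¹ * max B 0) := by
          refine add_le_add (Q0_bound a M ha ha1 hf0 hfM hfInt) (le_of_eq ?_)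
          rw [ENNReal.ofReal_mul hc0]
      _ = ENNReal.ofReal (M * Itot a * Itot (a ^ 2) + 2 * M * a⁻¹ * max B 0) :=
          (ENNReal.ofReal_add hnn1 hnn2).symm
  calc (∫⁻ x in Set.Icc (z - 1/2) (z + 1/2), ENNReal.ofReal (gfun a f x))
      ≤ Qfun a f z / ENNReal.ofReal (Wf a (1/2)) := h1
    _ ≤ ENNReal.ofReal (M * Itot a * Itot (a ^ 2) + 2 * M * a⁻¹ * max B 0)
        / ENNReal.ofReal (Wf a (1/2)) := ENNReal.div_le_div_right h2 _
    _ = ENNReal.ofReal ((M * Itot a * Itot (a ^ 2) + 2 * M * a⁻¹ * max B 0) / Wf a (1/2)) :=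
      (ENNReal.ofReal_div_of_pos (Wf_half_pos ha)).symm
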